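/- Let 0 < q < 1/2 and let M : ℍ → 𝕆 be a deterministic program without low-security inputs. Then GE[U](M) ≤ q if and only if M is non-interferent (i.e., M is a constant function). In particular, for programs without low-security inputs the minimum nonzero value of GE[U] is at least 1/2. -/

import Mathlib

/-!
Statement 17: Let `0 < q < 1/2` and `M : ℍ → 𝕆` a program without low-security
inputs.  Then `GE[U](M) ≤ q` iff `M` is non-interferent (constant).  In
particular, the minimum nonzero value of `GE[U]` for such programs is at least
`1/2`.
-/

/-- Guessing entropy of a (sub)distribution `p` on a finite type `X`:
`𝓖(p) = Σ_{1≤i≤m} i · p(x_i)` with `x_1, …, x_m` sorted so that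
`p(x_i) ≥ p(x_j)` whenever `i ≤ j`. -/
noncomputable def guess {X : Type*} [Fintype X] (p : X → ℝ) : ℝ :=
  ∑ i : Fin (Fintype.card X), ((i : ℕ) + 1 : ℝ) *
    p ((Fintype.equivFin X).symm
      (Tuple.sort (fun j => -p ((Fintype.equivFin X).symm j)) i))

/-- The uniform distribution on a finite type. -/
noncomputable def unif (X : Type*) [Fintype X] : X → ℝ :=
  fun _ => (Fintype.card X : ℝ)⁻¹

variable {Hi Oi : Type*}

/-- Probability `μ(O = o)` where `O = M(H)` (no low-security inputs). -/
noncomputable def pO [Fintype Hi] [DecidableEq Oi] (M : Hi → Oi) (μ : Hi → ℝ) (o : Oi) :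
    ℝ := ∑ h, if M h = o then μ h else 0

/-- Conditional guessing entropy `𝓖[μ](H|O)` where `O = M(H)`. -/
noncomputable def condGuessHO [Fintype Hi] [Fintype Oi] [DecidableEq Oi]
    (M : Hi → Oi) (μ : Hi → ℝ) : ℝ :=
  ∑ o : Oi, pO M μ o * guess (fun h : Hi => (if M h = o then μ h else 0) / pO M μ o)

/-- Guessing-entropy-based QIF for programs without low-security inputs:
`GE[μ](M) = 𝓖[μ](H) − 𝓖[μ](H|O)`. -/
noncomputable def GE0 [Fintype Hi] [Fintype Oi] [DecidableEq Oi]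
    (M : Hi → Oi) (μ : Hi → ℝ) : ℝ :=
  guess μ - condGuessHO M μ

lemma sum_aux (k : ℕ) : ∑ i ∈ Finset.range k, ((i : ℝ) + 1) = k * (k + 1) / 2 := by
  induction k with
  | zero => simp
  | succ m ih => rw [Finset.sum_range_succ, ih]; push_cast; ring

lemma card_filter_val_lt (n m : ℕ) (hm : m ≤ n) :
    (Finset.univ.filter fun j : Fin n => (j : ℕ) < m).card = m := by
  rw [Finset.card_filter, Fin.sum_univ_eq_sum_range (fun i => if i < m then 1 else 0) n,
    ← Finset.card_filter]
  have : (Finset.range n).filter (fun i => i < m) = Finset.range m := by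
    ext i; simp; omega
  rw [this, Finset.card_range]

lemma guess_two_valued {X : Type*} [Fintype X] (p : X → ℝ) (a : ℝ) (ha : 0 < a)
    (hp : ∀ x, p x = a ∨ p x = 0) :
    guess p = a * ((Finset.univ.filter fun x => p x = a).card *
      ((Finset.univ.filter fun x => p x = a).card + 1)) / 2 := by
  classical
  set n := Fintype.card X with hn
  set e : Fin n ≃ X := (Fintype.equivFin X).symm with he
  set f : Fin n → ℝ := fun j => -p (e j) with hf
  set σ := Tuple.sort f with hσ
  set g : Fin n → ℝ := fun i => p (e (σ i)) with hg
  set k := (Finset.univ.filter fun x => p x = a).card with hk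
  have hkn : k ≤ n := by
    rw [hk, hn]
    exact le_trans (Finset.card_filter_le _ _) (by simp)
  have hanti : Antitone g := by
    intro i j hij
    have := Tuple.monotone_sort f hij
    simp only [Function.comp, hf] at this
    simpa [hg] using this
  have hgv : ∀ i, g i = a ∨ g i = 0 := fun i => hp _
  -- card of indices where g = a equals k
  have hcard : (Finset.univ.filter fun i : Fin n => g i = a).card = k := by
    have E : Fin n ≃ X := σ.trans e
    have h1 : Fintype.card {i : Fin n // g i = a} = Fintype.card {x : X // p x = a} :=
      Fintype.card_congr ((σ.trans e).subtypeEquiv fun i => Iff.rfl)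
    rw [Fintype.card_subtype, Fintype.card_subtype] at h1
    exact h1
  have key : ∀ i : Fin n, g i = a ↔ (i : ℕ) < k := by
    intro i
    constructor
    · intro hia
      have hsub : (Finset.univ.filter fun j : Fin n => (j : ℕ) < (i : ℕ) + 1) ⊆
          (Finset.univ.filter fun j : Fin n => g j = a) := by
        intro j hj
        simp only [Finset.mem_filter, Finset.mem_univ, true_and] at hj ⊢
        have hji : j ≤ i := by
          rw [Fin.le_def]; omega
        have := hanti hji
        rcases hgv j with h | h
        · exact h
        · rw [hia] at this; rw [h] at this; linarith
      have := Finset.card_le_card hsub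
      rw [hcard, card_filter_val_lt n ((i : ℕ) + 1) (by omega)] at this
      omega
    · intro hik
      by_contra hne
      have hi0 : g i = 0 := (hgv i).resolve_left hne
      have hsub : (Finset.univ.filter fun j : Fin n => g j = a) ⊆
          (Finset.univ.filter fun j : Fin n => (j : ℕ) < (i : ℕ)) := by
        intro j hj
        simp only [Finset.mem_filter, Finset.mem_univ, true_and] at hj ⊢
        by_contra hji
        have hij : i ≤ j := by rw [Fin.le_def]; omega
        have := hanti hij
        rw [hi0, hj] at this
        linarith
      have := Finset.card_le_card hsub
      rw [hcard, card_filter_val_lt n (i : ℕ) (by omega)] at this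
      omega
  -- compute guess
  have hguess : guess p = ∑ i : Fin n, ((i : ℕ) + 1 : ℝ) * g i := rfl
  rw [hguess]
  have : ∀ i : Fin n, ((i : ℕ) + 1 : ℝ) * g i =
      (fun m : ℕ => if m < k then ((m : ℝ) + 1) * a else 0) (i : ℕ) := by
    intro i
    by_cases hik : (i : ℕ) < k
    · simp [hik, (key i).mpr hik]
    · simp [hik, ((hgv i).resolve_left (fun h => hik ((key i).mp h)))]
  rw [Finset.sum_congr rfl (fun i _ => this i),
    Fin.sum_univ_eq_sum_range (fun m : ℕ => if m < k then ((m : ℝ) + 1) * a else 0) n,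
    ← Finset.sum_filter]
  have hfil : (Finset.range n).filter (fun m => m < k) = Finset.range k := by
    ext i; simp; omega
  rw [hfil, ← Finset.sum_mul, sum_aux]
  ring

section Main
variable [Fintype Hi] [Fintype Oi] [DecidableEq Oi] [Nonempty Hi]

lemma guess_unif : guess (unif Hi) = ((Fintype.card Hi : ℝ) + 1) / 2 := by
  have hn : 0 < Fintype.card Hi := Fintype.card_pos
  unfold guess unif
  rw [Finset.sum_congr rfl (fun i _ => rfl),
    Fin.sum_univ_eq_sum_range (fun m : ℕ => ((m : ℝ) + 1) * (Fintype.card Hi : ℝ)⁻¹) _]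
  rw [← Finset.sum_mul, sum_aux]
  field_simp

lemma pO_unif (M : Hi → Oi) (o : Oi) :
    pO M (unif Hi) o =
      ((Finset.univ.filter fun h => M h = o).card : ℝ) / (Fintype.card Hi : ℝ) := by
  unfold pO unif
  rw [← Finset.sum_filter, Finset.sum_const, nsmul_eq_mul]
  rw [div_eq_mul_inv]

lemma term_unif (M : Hi → Oi) (o : Oi) :
    pO M (unif Hi) o *
      guess (fun h : Hi => (if M h = o then unif Hi h else 0) / pO M (unif Hi) o) =
      (((Finset.univ.filter fun h => M h = o).card : ℝ) *
        (((Finset.univ.filter fun h => M h = o).card : ℝ) + 1)) /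
        (2 * (Fintype.card Hi : ℝ)) := by
  have hn : (0 : ℝ) < (Fintype.card Hi : ℝ) := by
    exact_mod_cast Fintype.card_pos
  set k := (Finset.univ.filter fun h => M h = o).card with hk
  rcases Nat.eq_zero_or_pos k with hk0 | hkpos
  · rw [pO_unif, hk0]
    norm_num
    left
    intro x hx
    exact Finset.filter_eq_empty_iff.mp (Finset.card_eq_zero.mp (hk.symm.trans hk0))
      (Finset.mem_univ x) hx
  · have hkR : (0 : ℝ) < (k : ℝ) := by exact_mod_cast hkpos
    have hpO : pO M (unif Hi) o = (k : ℝ) / (Fintype.card Hi : ℝ) := pO_unif M o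
    have hfun : (fun h : Hi => (if M h = o then unif Hi h else 0) / pO M (unif Hi) o) =
        fun h : Hi => if M h = o then ((k : ℝ))⁻¹ else 0 := by
      funext h
      rw [hpO]
      unfold unif
      by_cases hMh : M h = o
      · simp only [hMh, if_true]
        field_simp
      · simp [hMh]
    rw [hfun, hpO]
    have := guess_two_valued (fun h : Hi => if M h = o then ((k : ℝ))⁻¹ else 0)
      ((k : ℝ))⁻¹ (by positivity) (fun h => by by_cases hMh : M h = o <;> simp [hMh])
    have hfilter : (Finset.univ.filter fun h : Hi =>
        (if M h = o then ((k : ℝ))⁻¹ else 0) = ((k : ℝ))⁻¹) =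
        (Finset.univ.filter fun h => M h = o) := by
      apply Finset.filter_congr
      intro h _
      by_cases hMh : M h = o <;> simp [hMh]
      · intro habs
        exact absurd habs.symm (by positivity)
    rw [hfilter, ← hk] at this
    rw [this]
    field_simp

end Main

/-- For `0 < q < 1/2`, `GE[U](M) ≤ q` iff `M` is non-interferent; in
particular, the minimum nonzero value of `GE[U]` is at least `1/2`. -/
theorem GE0_le_q_iff_noninterferent
    [Fintype Hi] [Fintype Oi] [DecidableEq Oi] [Nonempty Hi]
    (q : ℝ) (hq0 : 0 < q) (hq : q < 1 / 2) (M : Hi → Oi) :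
    (GE0 M (unif Hi) ≤ q ↔ ∀ h h' : Hi, M h = M h') ∧
      (GE0 M (unif Hi) ≠ 0 → 1 / 2 ≤ GE0 M (unif Hi)) := by
  classical
  have hnpos : 0 < Fintype.card Hi := Fintype.card_pos
  have hnR : (0 : ℝ) < (Fintype.card Hi : ℝ) := by exact_mod_cast hnpos
  have hcond : condGuessHO M (unif Hi) = ∑ o : Oi,
      (((Finset.univ.filter fun h => M h = o).card : ℝ) *
        (((Finset.univ.filter fun h => M h = o).card : ℝ) + 1)) /
        (2 * (Fintype.card Hi : ℝ)) :=
    Finset.sum_congr rfl fun o _ => term_unif M o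
  have hGE : GE0 M (unif Hi) = ((Fintype.card Hi : ℝ) + 1) / 2 - ∑ o : Oi,
      (((Finset.univ.filter fun h => M h = o).card : ℝ) *
        (((Finset.univ.filter fun h => M h = o).card : ℝ) + 1)) /
        (2 * (Fintype.card Hi : ℝ)) := by
    unfold GE0
    rw [guess_unif, hcond]
  have hsumk : ∑ o : Oi, (Finset.univ.filter fun h => M h = o).card = Fintype.card Hi := by
    rw [← Finset.card_univ (α := Hi)]
    exact (Finset.card_eq_sum_card_fiberwise (fun h _ => Finset.mem_univ (M h))).symm
  have hsumR : ∑ o : Oi, ((Finset.univ.filter fun h => M h = o).card : ℝ)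
      = (Fintype.card Hi : ℝ) := by
    exact_mod_cast congrArg (Nat.cast : ℕ → ℝ) hsumk
  have hconst : (∀ h h' : Hi, M h = M h') → GE0 M (unif Hi) = 0 := by
    intro hc
    obtain ⟨h0⟩ := ‹Nonempty Hi›
    have hk : ∀ o : Oi, (Finset.univ.filter fun h => M h = o) =
        if o = M h0 then Finset.univ else ∅ := by
      intro o
      split
      · next heq => ext h; simp [hc h h0, heq]
      · next hne =>
          ext h
          simp only [Finset.mem_filter, Finset.mem_univ, true_and, Finset.notMem_empty,
            iff_false]
          intro hmo
          exact hne (by rw [← hmo, hc h h0])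
    rw [hGE]
    have hterm : ∀ o : Oi,
        (((Finset.univ.filter fun h => M h = o).card : ℝ) *
          (((Finset.univ.filter fun h => M h = o).card : ℝ) + 1)) /
          (2 * (Fintype.card Hi : ℝ)) =
        if o = M h0 then ((Fintype.card Hi : ℝ) * ((Fintype.card Hi : ℝ) + 1)) /
          (2 * (Fintype.card Hi : ℝ)) else 0 := by
      intro o
      rw [hk o]
      split <;> simp [Finset.card_univ]
    rw [Finset.sum_congr rfl (fun o _ => hterm o), Finset.sum_ite_eq' Finset.univ (M h0)]
    simp only [Finset.mem_univ, if_true]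
    field_simp
    ring
  have hnonconst : (¬ ∀ h h' : Hi, M h = M h') → 1 / 2 ≤ GE0 M (unif Hi) := by
    intro hnc
    push_neg at hnc
    obtain ⟨h1, h2, hne⟩ := hnc
    have hkle : ∀ o : Oi, ((Finset.univ.filter fun h => M h = o).card : ℝ)
        ≤ (Fintype.card Hi : ℝ) - 1 := by
      intro o
      have hne' : (Finset.univ.filter fun h => M h = o) ≠ Finset.univ := by
        intro habs
        have m1 : M h1 = o := by
          have : h1 ∈ Finset.univ.filter fun h => M h = o := by
            rw [habs]; exact Finset.mem_univ h1
          exact (Finset.mem_filter.mp this).2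
        have m2 : M h2 = o := by
          have : h2 ∈ Finset.univ.filter fun h => M h = o := by
            rw [habs]; exact Finset.mem_univ h2
          exact (Finset.mem_filter.mp this).2
        exact hne (m1.trans m2.symm)
      have hlt : (Finset.univ.filter fun h => M h = o).card < Fintype.card Hi := by
        rw [← Finset.card_univ (α := Hi)]
        exact Finset.card_lt_card (lt_of_le_of_ne (Finset.filter_subset _ _) hne')
      have : (Finset.univ.filter fun h => M h = o).card ≤ Fintype.card Hi - 1 := by omega
      calc ((Finset.univ.filter fun h => M h = o).card : ℝ)
          ≤ ((Fintype.card Hi - 1 : ℕ) : ℝ) := by exact_mod_cast this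
        _ ≤ (Fintype.card Hi : ℝ) - 1 := by
            rw [Nat.cast_sub (by omega)]
            simp
    have hb : ∑ o : Oi,
        (((Finset.univ.filter fun h => M h = o).card : ℝ) *
          (((Finset.univ.filter fun h => M h = o).card : ℝ) + 1)) /
          (2 * (Fintype.card Hi : ℝ)) ≤ (Fintype.card Hi : ℝ) / 2 := by
      have step : ∀ o : Oi,
          (((Finset.univ.filter fun h => M h = o).card : ℝ) *
            (((Finset.univ.filter fun h => M h = o).card : ℝ) + 1)) /
            (2 * (Fintype.card Hi : ℝ)) ≤
          ((Fintype.card Hi : ℝ) * ((Finset.univ.filter fun h => M h = o).card : ℝ)) /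
            (2 * (Fintype.card Hi : ℝ)) := by
        intro o
        apply div_le_div_of_nonneg_right ?_ (by positivity)
        · have h1 := hkle o
          have h2 : (0 : ℝ) ≤ ((Finset.univ.filter fun h => M h = o).card : ℝ) :=
            Nat.cast_nonneg _
          nlinarith
      calc ∑ o : Oi, _ ≤ ∑ o : Oi,
          ((Fintype.card Hi : ℝ) * ((Finset.univ.filter fun h => M h = o).card : ℝ)) /
            (2 * (Fintype.card Hi : ℝ)) := Finset.sum_le_sum fun o _ => step o
        _ = (Fintype.card Hi : ℝ) / 2 := by
            rw [← Finset.sum_div, ← Finset.mul_sum, hsumR]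
            field_simp
    rw [hGE]
    linarith
  refine ⟨⟨fun hle => ?_, fun hc => ?_⟩, fun hne0 => ?_⟩
  · by_contra hns
    have := hnonconst hns
    linarith
  · rw [hconst hc]; linarith
  · by_cases hc : ∀ h h' : Hi, M h = M h'
    · exact absurd (hconst hc) hne0
    · exact hnonconst hc
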